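/- For every real t with t < log 2, the convex conjugate of h satisfies sup_{z > 0} ( t·z − h(z) ) = −log(2 − e^t), and the supremum is attained at z = e^t/(2 − e^t). -/

import Mathlib

/-- For `h(z) = log(2/(1+z)) + z·log(2z/(1+z))` and every real `t < log 2`, the convex
conjugate of `h` satisfies `sup_{z > 0} (t·z − h(z)) = −log(2 − eᵗ)`, the supremum being
attained at `z = eᵗ/(2 − eᵗ)`. -/
theorem h_convex_conjugate (h : ℝ → ℝ)
    (hh : ∀ z : ℝ, 0 < z →
      h z = Real.log (2 / (1 + z)) + z * Real.log (2 * z / (1 + z))) :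
    ∀ t : ℝ, t < Real.log 2 →
      IsGreatest {v : ℝ | ∃ z : ℝ, 0 < z ∧ v = t * z - h z}
          (-Real.log (2 - Real.exp t))
      ∧ 0 < Real.exp t / (2 - Real.exp t)
      ∧ t * (Real.exp t / (2 - Real.exp t)) - h (Real.exp t / (2 - Real.exp t))
          = -Real.log (2 - Real.exp t) := by
  intro t ht
  set a := Real.exp t with ha_def
  have ha0 : 0 < a := Real.exp_pos t
  have ha2 : a < 2 := by
    have := Real.exp_lt_exp.mpr ht
    rwa [Real.exp_log (by norm_num : (0:ℝ) < 2)] at this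
  have h2a : 0 < 2 - a := by linarith
  set z0 := a / (2 - a) with hz0_def
  have hz0 : 0 < z0 := div_pos ha0 h2a
  have h1z0 : 1 + z0 = 2 / (2 - a) := by
    field_simp [hz0_def]
    rw [hz0_def, add_mul, div_mul_cancel₀ _ h2a.ne']; ring
  have hta : Real.log a = t := Real.log_exp t
  -- value at z0
  have key : t * z0 - h z0 = -Real.log (2 - a) := by
    rw [hh z0 hz0]
    have e1 : 2 / (1 + z0) = 2 - a := by
      rw [h1z0]; field_simp
    have e2 : 2 * z0 / (1 + z0) = a := by
      rw [h1z0, hz0_def]; field_simp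
    rw [e1, e2, hta]; ring
  -- upper bound
  have ub : ∀ z : ℝ, 0 < z → t * z - h z ≤ -Real.log (2 - a) := by
    intro z hz
    have h1z : (0:ℝ) < 1 + z := by linarith
    have hu : (0:ℝ) < a * (1 + z) / (2 * z) := by positivity
    have hv : (0:ℝ) < (1 + z) * (2 - a) / 2 := by positivity
    have l1 : Real.log (a * (1 + z) / (2 * z)) ≤ a * (1 + z) / (2 * z) - 1 :=
      Real.log_le_sub_one_of_pos hu
    have l2 : Real.log ((1 + z) * (2 - a) / 2) ≤ (1 + z) * (2 - a) / 2 - 1 :=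
      Real.log_le_sub_one_of_pos hv
    have l1' : z * Real.log (a * (1 + z) / (2 * z)) ≤ a * (1 + z) / 2 - z := by
      have := mul_le_mul_of_nonneg_left l1 hz.le
      have hzz : z * (a * (1 + z) / (2 * z) - 1) = a * (1 + z) / 2 - z := by
        field_simp
      linarith [hzz ▸ this]
    -- log expansions
    have eu : Real.log (a * (1 + z) / (2 * z))
        = Real.log a + Real.log (1 + z) - (Real.log 2 + Real.log z) := by
      rw [Real.log_div (by positivity) (by positivity),
        Real.log_mul ha0.ne' h1z.ne', Real.log_mul (by norm_num) hz.ne']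
    have ev : Real.log ((1 + z) * (2 - a) / 2)
        = Real.log (1 + z) + Real.log (2 - a) - Real.log 2 := by
      rw [Real.log_div (by positivity) (by norm_num),
        Real.log_mul h1z.ne' h2a.ne']
    have e1 : Real.log (2 / (1 + z)) = Real.log 2 - Real.log (1 + z) :=
      Real.log_div (by norm_num) h1z.ne'
    have e2 : Real.log (2 * z / (1 + z))
        = Real.log 2 + Real.log z - Real.log (1 + z) := by
      rw [Real.log_div (by positivity) h1z.ne', Real.log_mul (by norm_num) hz.ne']
    have ident : t * z - h z + Real.log (2 - a)
        = z * Real.log (a * (1 + z) / (2 * z)) + Real.log ((1 + z) * (2 - a) / 2) := by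
      rw [hh z hz, eu, ev, e1, e2, ← hta]; ring
    have sum0 : a * (1 + z) / 2 - z + ((1 + z) * (2 - a) / 2 - 1) = 0 := by ring
    linarith
  refine ⟨⟨⟨z0, hz0, key.symm⟩, ?_⟩, hz0, key⟩
  rintro v ⟨z, hz, rfl⟩
  exact ub z hz
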